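/- Let (Ω, 𝓕, μ) be a probability space, 𝒳 a measurable space, 𝒴 a finite set with discrete σ-algebra, H a separable real Hilbert space, ψ : 𝒴 → H, X : Ω → 𝒳 and Y : Ω → 𝒴 measurable, and h* : 𝒳 → H measurable such that h* ∘ X is a version of the conditional expectation of ψ ∘ Y given the σ-algebra generated by X. Let p ∈ ℕ, let G : H → ℝ^p be a bounded linear operator with GG* = Id_{ℝ^p} (where G* : ℝ^p → H is the adjoint), and let γ ∈ [0,1]. Then: γ·E‖Gh*(X) − Gψ(Y)‖² + (1−γ)·E‖G*Gψ(Y) − ψ(Y)‖² = γ·E‖G*Gh*(X) − h*(X)‖² + (1−2γ)·E‖G*Gψ(Y) − ψ(Y)‖² + γ·(E‖ψ(Y)‖² − E‖h*(X)‖²). -/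

import Mathlib

open MeasureTheory ContinuousLinearMap
open scoped RealInnerProductSpace

section Aux

variable {Ω : Type*} {m m0 : MeasurableSpace Ω} {μ : Measure Ω}
  {H : Type*} [NormedAddCommGroup H] [InnerProductSpace ℝ H] [CompleteSpace H]

theorem oel_condexp_clm {E : Type*} [NormedAddCommGroup E] [NormedSpace ℝ E] [CompleteSpace E]
    (hm : m ≤ m0) [SigmaFinite (μ.trim hm)] {f : Ω → H} (hf : Integrable f μ)
    (T : H →L[ℝ] E) :
    (fun ω => T ((μ[f|m]) ω)) =ᵐ[μ] μ[fun ω => T (f ω)|m] := by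
  refine ae_eq_condExp_of_forall_setIntegral_eq hm (T.integrable_comp hf)
    (fun s _ _ => (T.integrable_comp integrable_condExp).integrableOn)
    (fun s hs hμs => ?_) ?_
  · rw [T.integral_comp_comm integrable_condExp.integrableOn,
      T.integral_comp_comm hf.integrableOn, setIntegral_condExp hm hf hs]
  · exact StronglyMeasurable.aestronglyMeasurable (T.continuous.comp_stronglyMeasurable stronglyMeasurable_condExp)

theorem oel_ae_norm_condexp_le [SecondCountableTopology H]
    (hm : m ≤ m0) [IsFiniteMeasure μ] {f : Ω → H} (hf : Integrable f μ)
    {C : ℝ} (hC0 : 0 ≤ C) (hC : ∀ ω, ‖f ω‖ ≤ C) :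
    ∀ᵐ ω ∂μ, ‖(μ[f|m]) ω‖ ≤ C := by
  haveI : Nonempty H := ⟨0⟩
  haveI : SigmaFinite (μ.trim hm) := by
    haveI : IsFiniteMeasure (μ.trim hm) :=
      ⟨by rw [trim_measurableSet_eq hm MeasurableSet.univ]; exact measure_lt_top μ _⟩
    infer_instance
  set u : ℕ → H := TopologicalSpace.denseSeq H with hu_def
  have hu : DenseRange u := TopologicalSpace.denseRange_denseSeq H
  have key : ∀ n, ∀ᵐ ω ∂μ, ⟪u n, (μ[f|m]) ω⟫ ≤ ‖u n‖ * C := by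
    intro n
    have h1 := oel_condexp_clm hm hf (innerSL ℝ (u n))
    have h2 : μ[fun ω => (innerSL ℝ (u n)) (f ω)|m] ≤ᵐ[μ] μ[fun _ => ‖u n‖ * C|m] := by
      refine condExp_mono ((innerSL ℝ (u n)).integrable_comp hf) (integrable_const _)
        (Filter.Eventually.of_forall fun ω => ?_)
      simp only [innerSL_apply_apply]
      exact (real_inner_le_norm _ _).trans
        (mul_le_mul_of_nonneg_left (hC ω) (norm_nonneg _))
    rw [condExp_const hm] at h2
    filter_upwards [h1, h2] with ω e1 e2
    rw [← e1] at e2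
    simpa only [innerSL_apply_apply] using e2
  filter_upwards [ae_all_iff.mpr key] with ω hω
  set x := (μ[f|m]) ω with hx
  by_contra hlt
  push_neg at hlt
  have hxpos : 0 < ‖x‖ := lt_of_le_of_lt hC0 hlt
  have hgap : 0 < ‖x‖ ^ 2 - ‖x‖ * C := by nlinarith
  set ε : ℝ := (‖x‖ ^ 2 - ‖x‖ * C) / (‖x‖ + C + 1) with hε_def
  have hden : 0 < ‖x‖ + C + 1 := by positivity
  have hεpos : 0 < ε := div_pos hgap hden
  obtain ⟨n, hn⟩ := Metric.denseRange_iff.mp hu x ε hεpos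
  rw [dist_comm, dist_eq_norm] at hn
  have h1 : ⟪u n, x⟫ ≤ ‖u n‖ * C := hω n
  have h2 : ‖u n‖ ≤ ‖x‖ + ε := by
    have := norm_le_norm_add_norm_sub' (u n) x
    -- ‖u n‖ ≤ ‖x‖ + ‖u n - x‖
    linarith [hn.le]
  have h3 : ‖x‖ ^ 2 - ε * ‖x‖ ≤ ⟪u n, x⟫ := by
    have : ⟪u n, x⟫ = ⟪x, x⟫ + ⟪u n - x, x⟫ := by
      rw [inner_sub_left]; ring
    rw [this, real_inner_self_eq_norm_sq]
    have habs : |⟪u n - x, x⟫| ≤ ‖u n - x‖ * ‖x‖ := abs_real_inner_le_norm _ _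
    have : -(ε * ‖x‖) ≤ ⟪u n - x, x⟫ := by
      have := neg_abs_le ⟪u n - x, x⟫
      nlinarith [norm_nonneg x, hn.le]
    linarith
  have heq : ε * (‖x‖ + C + 1) = ‖x‖ ^ 2 - ‖x‖ * C := div_mul_cancel₀ _ (ne_of_gt hden)
  nlinarith [mul_le_mul_of_nonneg_right h2 hC0]

end Aux


/-- **Equivalence of the OEL objective with the subspace-learning objective.**
With `h*(x) = E[ψ(Y) | X = x]` and `G : H → ℝ^p` with orthonormal rows (`GG* = Id`),
for every `γ ∈ [0,1]`:
`γ·E‖Gh*(X) − Gψ(Y)‖² + (1−γ)·E‖G*Gψ(Y) − ψ(Y)‖²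
  = γ·E‖G*Gh*(X) − h*(X)‖² + (1−2γ)·E‖G*Gψ(Y) − ψ(Y)‖² + γ·(E‖ψ(Y)‖² − E‖h*(X)‖²)`. -/
theorem oel_objective_eq_subspace_objective
    {Ω : Type*} [MeasurableSpace Ω] (μ : Measure Ω) [IsProbabilityMeasure μ]
    {X : Type*} [MeasurableSpace X]
    {Y : Type*} [Fintype Y] [MeasurableSpace Y] [DiscreteMeasurableSpace Y]
    {H : Type*} [NormedAddCommGroup H] [InnerProductSpace ℝ H] [CompleteSpace H]
    [SecondCountableTopology H] [MeasurableSpace H] [BorelSpace H]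
    (ψ : Y → H)
    (Xv : Ω → X) (Yv : Ω → Y) (hXv : Measurable Xv) (hYv : Measurable Yv)
    (hstar : X → H) (hstar_meas : Measurable hstar)
    (hstar_condexp : (fun ω => hstar (Xv ω)) =ᵐ[μ]
      μ[fun ω => ψ (Yv ω)|MeasurableSpace.comap Xv inferInstance])
    (p : ℕ) (G : H →L[ℝ] EuclideanSpace ℝ (Fin p))
    (hG : G ∘L (adjoint G) = ContinuousLinearMap.id ℝ (EuclideanSpace ℝ (Fin p)))
    (γ : ℝ) (hγ : γ ∈ Set.Icc (0 : ℝ) 1) :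
    γ * ∫ ω, ‖G (hstar (Xv ω)) - G (ψ (Yv ω))‖ ^ 2 ∂μ +
      (1 - γ) * ∫ ω, ‖(adjoint G) (G (ψ (Yv ω))) - ψ (Yv ω)‖ ^ 2 ∂μ =
    γ * ∫ ω, ‖(adjoint G) (G (hstar (Xv ω))) - hstar (Xv ω)‖ ^ 2 ∂μ +
      (1 - 2 * γ) * ∫ ω, ‖(adjoint G) (G (ψ (Yv ω))) - ψ (Yv ω)‖ ^ 2 ∂μ +
      γ * ((∫ ω, ‖ψ (Yv ω)‖ ^ 2 ∂μ) - ∫ ω, ‖hstar (Xv ω)‖ ^ 2 ∂μ) := by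
  -- notation
  have hm : MeasurableSpace.comap Xv inferInstance ≤ ‹MeasurableSpace Ω› := hXv.comap_le
  haveI : SigmaFinite (μ.trim hm) := by
    haveI : IsFiniteMeasure (μ.trim hm) :=
      ⟨by rw [trim_measurableSet_eq hm MeasurableSet.univ]; exact measure_lt_top μ _⟩
    infer_instance
  -- basic boundedness and measurability
  set Cf : ℝ := ∑ y : Y, ‖ψ y‖ with hCf_def
  have hCf0 : (0 : ℝ) ≤ Cf := Finset.sum_nonneg fun y _ => norm_nonneg _
  have hCf : ∀ ω, ‖ψ (Yv ω)‖ ≤ Cf := fun ω =>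
    Finset.single_le_sum (f := fun y => ‖ψ y‖) (fun y _ => norm_nonneg (ψ y))
      (Finset.mem_univ (Yv ω))
  have hf_meas : Measurable fun ω => ψ (Yv ω) := (Measurable.of_discrete (f := ψ)).comp hYv
  have hf_sm : StronglyMeasurable fun ω => ψ (Yv ω) := hf_meas.stronglyMeasurable
  have hf_int : Integrable (fun ω => ψ (Yv ω)) μ :=
    ⟨hf_sm.aestronglyMeasurable, HasFiniteIntegral.of_bounded (Filter.Eventually.of_forall hCf)⟩
  have hh_meas : Measurable fun ω => hstar (Xv ω) := hstar_meas.comp hXv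
  have hh_sm : StronglyMeasurable fun ω => hstar (Xv ω) := hh_meas.stronglyMeasurable
  have hh_bdd : ∀ᵐ ω ∂μ, ‖hstar (Xv ω)‖ ≤ Cf := by
    filter_upwards [hstar_condexp, oel_ae_norm_condexp_le hm hf_int hCf0 hCf] with ω e1 e2
    rw [e1]; exact e2
  -- integrability helper
  have int_bdd : ∀ {g : Ω → ℝ} {B : ℝ}, StronglyMeasurable g → (∀ᵐ ω ∂μ, |g ω| ≤ B) →
      Integrable g μ := fun hg hB =>
    ⟨hg.aestronglyMeasurable,
      HasFiniteIntegral.of_bounded (hB.mono fun ω h => by simpa [Real.norm_eq_abs] using h)⟩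
  -- coordinate projections
  set T : Fin p → (H →L[ℝ] ℝ) := fun i => (EuclideanSpace.proj i).comp G with hT_def
  have hT_apply : ∀ i x, T i x = G x i := fun i x => rfl
  have hTa_bdd : ∀ i, ∀ᵐ ω ∂μ, |T i (hstar (Xv ω))| ≤ ‖T i‖ * Cf := fun i => by
    filter_upwards [hh_bdd] with ω hω
    calc |T i (hstar (Xv ω))| = ‖T i (hstar (Xv ω))‖ := rfl
      _ ≤ ‖T i‖ * ‖hstar (Xv ω)‖ := (T i).le_opNorm _
      _ ≤ ‖T i‖ * Cf := mul_le_mul_of_nonneg_left hω (norm_nonneg _)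
  have hTb_bdd : ∀ i ω, |T i (ψ (Yv ω))| ≤ ‖T i‖ * Cf := fun i ω =>
    ((T i).le_opNorm _).trans (mul_le_mul_of_nonneg_left (hCf ω) (norm_nonneg _))
  have hTa_sm : ∀ i, StronglyMeasurable fun ω => T i (hstar (Xv ω)) := fun i =>
    (T i).continuous.comp_stronglyMeasurable hh_sm
  have hTb_sm : ∀ i, StronglyMeasurable fun ω => T i (ψ (Yv ω)) := fun i =>
    (T i).continuous.comp_stronglyMeasurable hf_sm
  have hint_ab : ∀ i, Integrable (fun ω => T i (hstar (Xv ω)) * T i (ψ (Yv ω))) μ := fun i => by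
    refine int_bdd (B := (‖T i‖ * Cf) * (‖T i‖ * Cf)) ((hTa_sm i).mul (hTb_sm i)) ?_
    filter_upwards [hTa_bdd i] with ω h1
    rw [abs_mul]
    exact mul_le_mul h1 (hTb_bdd i ω) (abs_nonneg _)
      (mul_nonneg (norm_nonneg _) hCf0)
  have hint_aa : ∀ i, Integrable (fun ω => T i (hstar (Xv ω)) * T i (hstar (Xv ω))) μ := fun i => by
    refine int_bdd (B := (‖T i‖ * Cf) * (‖T i‖ * Cf)) ((hTa_sm i).mul (hTa_sm i)) ?_
    filter_upwards [hTa_bdd i] with ω h1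
    rw [abs_mul]
    exact mul_le_mul h1 h1 (abs_nonneg _) (mul_nonneg (norm_nonneg _) hCf0)
  have hint_b : ∀ i, Integrable (fun ω => T i (ψ (Yv ω))) μ := fun i =>
    int_bdd (hTb_sm i) (Filter.Eventually.of_forall (hTb_bdd i))
  -- the key orthogonality identity, coordinatewise
  have key_i : ∀ i, ∫ ω, T i (hstar (Xv ω)) * T i (ψ (Yv ω)) ∂μ
      = ∫ ω, T i (hstar (Xv ω)) * T i (hstar (Xv ω)) ∂μ := by
    intro i
    have hXm : Measurable[MeasurableSpace.comap Xv inferInstance] Xv := Measurable.of_comap_le le_rfl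
    have ha_m : StronglyMeasurable[MeasurableSpace.comap Xv inferInstance] fun ω => T i (hstar (Xv ω)) :=
      (((T i).continuous.measurable.comp hstar_meas).comp hXm).stronglyMeasurable
    have hcond : (fun ω => T i (hstar (Xv ω))) =ᵐ[μ] μ[fun ω => T i (ψ (Yv ω))|MeasurableSpace.comap Xv inferInstance] := by
      have h1 := oel_condexp_clm hm hf_int (T i)
      exact (hstar_condexp.fun_comp (T i)).trans h1
    calc ∫ ω, T i (hstar (Xv ω)) * T i (ψ (Yv ω)) ∂μ
        = ∫ ω, (μ[(fun ω => T i (hstar (Xv ω))) * (fun ω => T i (ψ (Yv ω)))|MeasurableSpace.comap Xv inferInstance]) ω ∂μ :=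
          (integral_condExp hm).symm
      _ = ∫ ω, ((fun ω => T i (hstar (Xv ω))) * μ[fun ω => T i (ψ (Yv ω))|MeasurableSpace.comap Xv inferInstance]) ω ∂μ :=
          integral_congr_ae (condExp_mul_of_stronglyMeasurable_left ha_m (hint_ab i) (hint_b i))
      _ = ∫ ω, T i (hstar (Xv ω)) * T i (hstar (Xv ω)) ∂μ := by
          refine integral_congr_ae (hcond.mono fun ω e => ?_)
          simp only [Pi.mul_apply, ← e]
  -- inner product expansion on EuclideanSpace
  have hQ : ∀ u v : H, ⟪G u, G v⟫ = ∑ i : Fin p, T i u * T i v := fun u v => by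
    simp only [hT_apply]
    rw [PiLp.inner_apply]
    congr 1
    funext i
    simp only [RCLike.inner_apply, conj_trivial]
    ring
  -- integrability of the quadratic functionals
  have hGa_bdd : ∀ᵐ ω ∂μ, ‖G (hstar (Xv ω))‖ ≤ ‖G‖ * Cf := by
    filter_upwards [hh_bdd] with ω hω
    exact (G.le_opNorm _).trans (mul_le_mul_of_nonneg_left hω (norm_nonneg _))
  have hGb_bdd : ∀ ω, ‖G (ψ (Yv ω))‖ ≤ ‖G‖ * Cf := fun ω =>
    (G.le_opNorm _).trans (mul_le_mul_of_nonneg_left (hCf ω) (norm_nonneg _))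
  have hGa_sm : StronglyMeasurable fun ω => G (hstar (Xv ω)) :=
    G.continuous.comp_stronglyMeasurable hh_sm
  have hGb_sm : StronglyMeasurable fun ω => G (ψ (Yv ω)) :=
    G.continuous.comp_stronglyMeasurable hf_sm
  have intQhh : Integrable (fun ω => ⟪G (hstar (Xv ω)), G (hstar (Xv ω))⟫) μ := by
    refine int_bdd (B := (‖G‖ * Cf) * (‖G‖ * Cf)) (hGa_sm.inner hGa_sm) ?_
    filter_upwards [hGa_bdd] with ω h1
    exact (abs_real_inner_le_norm _ _).trans
      (mul_le_mul h1 h1 (norm_nonneg _) (mul_nonneg (norm_nonneg _) hCf0))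
  have intQhf : Integrable (fun ω => ⟪G (hstar (Xv ω)), G (ψ (Yv ω))⟫) μ := by
    refine int_bdd (B := (‖G‖ * Cf) * (‖G‖ * Cf)) (hGa_sm.inner hGb_sm) ?_
    filter_upwards [hGa_bdd] with ω h1
    exact (abs_real_inner_le_norm _ _).trans
      (mul_le_mul h1 (hGb_bdd ω) (norm_nonneg _) (mul_nonneg (norm_nonneg _) hCf0))
  have intQff : Integrable (fun ω => ⟪G (ψ (Yv ω)), G (ψ (Yv ω))⟫) μ := by
    refine int_bdd (B := (‖G‖ * Cf) * (‖G‖ * Cf)) (hGb_sm.inner hGb_sm) ?_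
    refine Filter.Eventually.of_forall fun ω => ?_
    exact (abs_real_inner_le_norm _ _).trans
      (mul_le_mul (hGb_bdd ω) (hGb_bdd ω) (norm_nonneg _) (mul_nonneg (norm_nonneg _) hCf0))
  have intNf : Integrable (fun ω => ‖ψ (Yv ω)‖ ^ 2) μ := by
    refine int_bdd (B := Cf ^ 2) (hf_sm.norm.pow 2) ?_
    refine Filter.Eventually.of_forall fun ω => ?_
    rw [abs_of_nonneg (by positivity)]
    exact pow_le_pow_left₀ (norm_nonneg _) (hCf ω) 2
  have intNh : Integrable (fun ω => ‖hstar (Xv ω)‖ ^ 2) μ := by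
    refine int_bdd (B := Cf ^ 2) (hh_sm.norm.pow 2) ?_
    filter_upwards [hh_bdd] with ω hω
    rw [abs_of_nonneg (by positivity)]
    exact pow_le_pow_left₀ (norm_nonneg _) hω 2
  -- the key identity, assembled
  have key : ∫ ω, ⟪G (hstar (Xv ω)), G (ψ (Yv ω))⟫ ∂μ
      = ∫ ω, ⟪G (hstar (Xv ω)), G (hstar (Xv ω))⟫ ∂μ := by
    simp_rw [hQ]
    rw [integral_finset_sum _ (fun i _ => hint_ab i),
      integral_finset_sum _ (fun i _ => hint_aa i)]
    exact Finset.sum_congr rfl fun i _ => key_i i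
  -- pointwise algebraic identities
  have hGPG : ∀ u : H, G ((adjoint G) (G u)) = G u := fun u => by
    have := congrArg (fun L : EuclideanSpace ℝ (Fin p) →L[ℝ] EuclideanSpace ℝ (Fin p) =>
      L (G u)) hG
    simpa using this
  have id1 : ∀ u v : H, ‖G u - G v‖ ^ 2 = ⟪G u, G u⟫ - 2 * ⟪G u, G v⟫ + ⟪G v, G v⟫ :=
    fun u v => by
      rw [norm_sub_sq_real, real_inner_self_eq_norm_sq, real_inner_self_eq_norm_sq]
  have id2 : ∀ u : H, ‖(adjoint G) (G u) - u‖ ^ 2 = ‖u‖ ^ 2 - ⟪G u, G u⟫ := fun u => by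
    have h1 : ⟪(adjoint G) (G u), u⟫ = ⟪G u, G u⟫ := adjoint_inner_left G u (G u)
    have h2 : ‖(adjoint G) (G u)‖ ^ 2 = ⟪G u, G u⟫ := by
      rw [← real_inner_self_eq_norm_sq, adjoint_inner_left, hGPG]
    rw [norm_sub_sq_real, h1, h2]; ring
  -- expand the integrals
  have E1 : ∫ ω, ‖G (hstar (Xv ω)) - G (ψ (Yv ω))‖ ^ 2 ∂μ
      = (∫ ω, ⟪G (hstar (Xv ω)), G (hstar (Xv ω))⟫ ∂μ)
        - 2 * (∫ ω, ⟪G (hstar (Xv ω)), G (ψ (Yv ω))⟫ ∂μ)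
        + ∫ ω, ⟪G (ψ (Yv ω)), G (ψ (Yv ω))⟫ ∂μ := by
    have i2 : Integrable (fun ω => 2 * ⟪G (hstar (Xv ω)), G (ψ (Yv ω))⟫) μ :=
      intQhf.const_mul 2
    have i1 : Integrable (fun ω => ⟪G (hstar (Xv ω)), G (hstar (Xv ω))⟫
        - 2 * ⟪G (hstar (Xv ω)), G (ψ (Yv ω))⟫) μ := intQhh.sub i2
    simp_rw [id1]
    rw [integral_add i1 intQff, integral_sub intQhh i2, integral_const_mul]
  have E2 : ∫ ω, ‖(adjoint G) (G (ψ (Yv ω))) - ψ (Yv ω)‖ ^ 2 ∂μ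
      = (∫ ω, ‖ψ (Yv ω)‖ ^ 2 ∂μ) - ∫ ω, ⟪G (ψ (Yv ω)), G (ψ (Yv ω))⟫ ∂μ := by
    simp_rw [id2]
    rw [integral_sub intNf intQff]
  have E3 : ∫ ω, ‖(adjoint G) (G (hstar (Xv ω))) - hstar (Xv ω)‖ ^ 2 ∂μ
      = (∫ ω, ‖hstar (Xv ω)‖ ^ 2 ∂μ) - ∫ ω, ⟪G (hstar (Xv ω)), G (hstar (Xv ω))⟫ ∂μ := by
    simp_rw [id2]
    rw [integral_sub intNh intQhh]
  rw [E1, E2, E3, key]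
  ring
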